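/- Fix integers l ≤ u with N = u − l + 1 ≥ 1, and σ > 0. Then lim_{x→0⁺} φ_σ(x) / ( (1/(2N)) · Σ_{i=0}^{u−l} [φ_σ((2(u−l)−2i+1)x) + φ_σ((2i+1)x)] ) = 1/N, where φ_σ(ζ) = (2/√(2π)) ∫₀^{ζ/(2σ)} e^{−t²/2} dt. -/

import Mathlib

open Filter Set

noncomputable def phi (σ ζ : ℝ) : ℝ :=
  (2 / Real.sqrt (2 * Real.pi)) * ∫ t in (0:ℝ)..(ζ / (2 * σ)), Real.exp (-t ^ 2 / 2)

theorem stmt18 (l u : ℤ) (hlu : l ≤ u) (σ : ℝ) (hσ : 0 < σ) :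
    Filter.Tendsto
      (fun x : ℝ => phi σ x /
        ((1 / (2 * ((u : ℝ) - l + 1))) *
          ∑ i ∈ Finset.range ((u - l).toNat + 1),
            (phi σ ((2 * ((u : ℝ) - l) - 2 * i + 1) * x) + phi σ ((2 * (i : ℝ) + 1) * x))))
      (nhdsWithin 0 (Set.Ioi 0)) (nhds (1 / ((u : ℝ) - l + 1))) := by
  set m := (u - l).toNat with hmdef
  have hm' : ((u : ℝ) - l) = m := by
    have h1 : ((m : ℤ)) = u - l := Int.toNat_of_nonneg (by omega)
    have h2 := congrArg (fun z : ℤ => (z : ℝ)) h1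
    push_cast at h2
    linarith
  set N : ℝ := (u : ℝ) - l + 1 with hNdef
  have hNpos : 0 < N := by rw [hNdef, hm']; positivity
  set c : ℝ := (2 / Real.sqrt (2 * Real.pi)) * (1 / (2 * σ)) with hcdef
  have hcpos : 0 < c := by
    have h := Real.sqrt_pos.mpr (by positivity : (0:ℝ) < 2 * Real.pi)
    positivity
  -- derivative of phi at 0
  have hcont : Continuous fun t : ℝ => Real.exp (-t ^ 2 / 2) := by continuity
  have h1 : HasDerivAt (fun y : ℝ => ∫ t in (0:ℝ)..y, Real.exp (-t ^ 2 / 2)) 1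
      ((0:ℝ)/(2*σ)) := by
    have := intervalIntegral.integral_hasDerivAt_right
      (hcont.intervalIntegrable 0 ((0:ℝ)/(2*σ)))
      (hcont.stronglyMeasurable.stronglyMeasurableAtFilter) hcont.continuousAt
    simpa using this
  have h2 : HasDerivAt (fun ζ : ℝ => ζ / (2 * σ)) (1/(2*σ)) 0 :=
    (hasDerivAt_id (0:ℝ)).div_const (2*σ)
  have h3 := HasDerivAt.comp 0 h1 h2
  have hderiv : HasDerivAt (phi σ) c 0 := by
    have h4 := h3.const_mul (2 / Real.sqrt (2 * Real.pi))
    have heq : phi σ = fun ζ => (2 / Real.sqrt (2 * Real.pi)) *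
        ((fun y : ℝ => ∫ t in (0:ℝ)..y, Real.exp (-t ^ 2 / 2)) ∘ fun ζ : ℝ => ζ / (2 * σ)) ζ := rfl
    rw [heq]
    rw [show c = 2 / Real.sqrt (2 * Real.pi) * (1 * (1 / (2 * σ))) by rw [hcdef]; ring]
    exact h4
  have hphi0 : phi σ 0 = 0 := by simp [phi]
  have hg : Tendsto (fun y => phi σ y / y) (nhdsWithin (0:ℝ) {0}ᶜ) (nhds c) := by
    have := hasDerivAt_iff_tendsto_slope.mp hderiv
    simpa [slope_fun_def, hphi0, div_eq_inv_mul] using this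
  -- key: for a > 0, phi σ (a*x)/x → c*a on 𝓝[>]0
  have key : ∀ a : ℝ, 0 < a →
      Tendsto (fun x => phi σ (a*x) / x) (nhdsWithin (0:ℝ) (Set.Ioi 0)) (nhds (c * a)) := by
    intro a ha
    have hmap : Tendsto (fun x : ℝ => a * x) (nhdsWithin (0:ℝ) (Set.Ioi 0))
        (nhdsWithin (0:ℝ) {0}ᶜ) := by
      rw [tendsto_nhdsWithin_iff]
      constructor
      · have : Tendsto (fun x : ℝ => a * x) (nhds 0) (nhds 0) := by
          simpa using (continuous_mul_left a).tendsto (0:ℝ)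
        exact this.mono_left nhdsWithin_le_nhds
      · filter_upwards [self_mem_nhdsWithin] with x hx
        exact (mul_pos ha hx).ne'
    have hcomp := hg.comp hmap
    have h5 : Tendsto (fun x => a * (phi σ (a*x) / (a*x))) (nhdsWithin (0:ℝ) (Set.Ioi 0))
        (nhds (a * c)) := hcomp.const_mul a
    rw [mul_comm c a]
    refine h5.congr' ?_
    filter_upwards [self_mem_nhdsWithin] with x hx
    have hx0 : x ≠ 0 := ne_of_gt hx
    field_simp
  -- coefficients
  have hApos : ∀ i ∈ Finset.range (m+1), (0:ℝ) < 2 * ((u : ℝ) - l) - 2 * i + 1 := by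
    intro i hi
    rw [hm']
    have him : (i:ℝ) ≤ m := by exact_mod_cast Nat.lt_succ_iff.mp (Finset.mem_range.mp hi)
    linarith
  have hBpos : ∀ i : ℕ, (0:ℝ) < 2 * (i:ℝ) + 1 := by intro i; positivity
  -- sum limit
  have hsum : Tendsto (fun x => ∑ i ∈ Finset.range (m+1),
      (phi σ ((2 * ((u : ℝ) - l) - 2 * i + 1) * x) / x + phi σ ((2 * (i:ℝ) + 1) * x) / x))
      (nhdsWithin (0:ℝ) (Set.Ioi 0))
      (nhds (∑ i ∈ Finset.range (m+1),
        (c * (2 * ((u : ℝ) - l) - 2 * i + 1) + c * (2 * (i:ℝ) + 1)))) := by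
    apply tendsto_finset_sum
    intro i hi
    exact (key _ (hApos i hi)).add (key _ (hBpos i))
  have hsumval : (∑ i ∈ Finset.range (m+1),
      (c * (2 * ((u : ℝ) - l) - 2 * i + 1) + c * (2 * (i:ℝ) + 1))) = 2 * N * N * c := by
    have : ∀ i ∈ Finset.range (m+1),
        c * (2 * ((u : ℝ) - l) - 2 * i + 1) + c * (2 * (i:ℝ) + 1) = c * (2 * N) := by
      intro i _
      rw [hNdef]; ring
    rw [Finset.sum_congr rfl this, Finset.sum_const, Finset.card_range]
    rw [hNdef, hm']
    -- push_cast
    ring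
  -- denominator limit
  have hden : Tendsto (fun x => (1 / (2 * N)) * ∑ i ∈ Finset.range (m+1),
      (phi σ ((2 * ((u : ℝ) - l) - 2 * i + 1) * x) / x + phi σ ((2 * (i:ℝ) + 1) * x) / x))
      (nhdsWithin (0:ℝ) (Set.Ioi 0)) (nhds (N * c)) := by
    have := hsum.const_mul (1 / (2 * N))
    rw [hsumval] at this
    convert this using 2
    field_simp
  -- numerator limit
  have hnum : Tendsto (fun x => phi σ x / x) (nhdsWithin (0:ℝ) (Set.Ioi 0)) (nhds c) :=
    hg.mono_left (nhdsWithin_mono 0 (fun x hx => ne_of_gt hx))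
  have hNc : N * c ≠ 0 := by positivity
  have hfinal := hnum.div hden hNc
  have hlim : c / (N * c) = 1 / N := by
    field_simp
  rw [hlim] at hfinal
  refine hfinal.congr' ?_
  filter_upwards [self_mem_nhdsWithin] with x hx
  have hx0 : (x:ℝ) ≠ 0 := ne_of_gt hx
  have hS : (∑ i ∈ Finset.range (m+1),
      (phi σ ((2 * ((u : ℝ) - l) - 2 * i + 1) * x) / x + phi σ ((2 * (i:ℝ) + 1) * x) / x))
      = (∑ i ∈ Finset.range (m+1),
        (phi σ ((2 * ((u : ℝ) - l) - 2 * i + 1) * x) + phi σ ((2 * (i:ℝ) + 1) * x))) / x := by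
    rw [Finset.sum_div]
    exact Finset.sum_congr rfl (fun i _ => (add_div _ _ _).symm)
  simp only [Pi.div_apply]
  rw [hS, ← mul_div_assoc, div_div_eq_mul_div, div_mul_cancel₀ _ hx0]
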